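/- Let p and q be indeterminates, omega a primitive cube root of unity, and define g(k,n) = 3n - k if k ≡ 2 (mod 3) and g(k,n) = k otherwise. Then for every nonnegative integer m and every z, the sum over n from 0 to 3m of q^{C(n+1,2)} * p^{C(n,2)} * z^n * [3m choose n]_p * (sum over k from n to 2n of q^{(1/3)(k^2 - g(k,n)) - k*n} * [n choose k-n]_q * omega^k) equals (z;p)_{3m} = prod_{i=0}^{3m-1}(1 - z p^i). -/
import Mathlib


/-- Gaussian binomial coefficient `[n choose r]_q`, defined via the q-Pascal
recurrence, with the convention that it is `0` when `r < 0` or `r > n`. -/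
def qbinom {K : Type*} [CommRing K] (q : K) : ℕ → ℤ → K
  | 0, r => if r = 0 then 1 else 0
  | n + 1, r => q ^ r.toNat * qbinom q n r + qbinom q n (r - 1)

section qb
variable {K : Type*} [CommRing K] (q : K)

lemma qbinom_succ (n : ℕ) (r : ℤ) :
    qbinom q (n+1) r = q ^ r.toNat * qbinom q n r + qbinom q n (r - 1) := rfl

lemma qbinom_neg (n : ℕ) : ∀ r : ℤ, r < 0 → qbinom q n r = 0 := by
  induction n with
  | zero => intro r hr; simp [qbinom, hr.ne]
  | succ n ih =>
      intro r hr
      rw [qbinom_succ, ih r hr, ih (r-1) (by omega)]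
      ring

lemma qbinom_gt (n : ℕ) : ∀ r : ℤ, (n : ℤ) < r → qbinom q n r = 0 := by
  induction n with
  | zero => intro r hr; simp [qbinom]; omega
  | succ n ih =>
      intro r hr
      push_cast at hr
      rw [qbinom_succ, ih r (by omega), ih (r-1) (by omega)]
      ring

lemma qbinom_pascal2 (n : ℕ) : ∀ r : ℤ,
    qbinom q (n+1) r = qbinom q n r + q ^ ((n : ℤ) + 1 - r).toNat * qbinom q n (r - 1) := by
  induction n with
  | zero =>
      intro r
      rcases eq_or_ne r 0 with rfl | h0
      · simp [qbinom]
      rcases eq_or_ne r 1 with rfl | h1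
      · norm_num [qbinom]
      · rw [qbinom_succ]
        simp [qbinom, h0, h1, sub_eq_zero, (by omega : r - 1 ≠ 0)]
  | succ n ih =>
      intro r
      push_cast
      rcases lt_or_ge r 0 with hr | hr
      · rw [qbinom_neg q _ _ hr, qbinom_neg q _ _ hr, qbinom_neg q _ _ (by omega)]
        ring
      rcases lt_or_ge ((n:ℤ)+2) r with hr2 | hr2
      · rw [qbinom_gt q _ _ (by push_cast; omega), qbinom_gt q _ _ (by push_cast; omega),
          qbinom_gt q _ _ (by push_cast; omega)]
        ring
      rcases eq_or_lt_of_le hr with h0 | hrpos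
      · rw [← h0, qbinom_succ, qbinom_neg q (n+1) (0-1) (by omega)]
        norm_num
      rcases lt_or_ge ((n:ℤ)+1) r with hb | hb
      · -- r = n+2
        rw [qbinom_succ, qbinom_gt q (n+1) r (by push_cast; omega),
          (by omega : ((n:ℤ)+1+1-r).toNat = 0)]
        ring
      -- 1 ≤ r ≤ n+1
      have hL : qbinom q (n+1+1) r = q ^ r.toNat * (qbinom q n r
            + q ^ ((n:ℤ)+1-r).toNat * qbinom q n (r-1))
          + (qbinom q n (r-1) + q ^ ((n:ℤ)+1-(r-1)).toNat * qbinom q n (r-1-1)) := by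
        rw [qbinom_succ, ih r, ih (r-1)]
      have hR : qbinom q (n+1) r + q ^ ((n:ℤ)+1+1-r).toNat * qbinom q (n+1) (r-1)
          = (q ^ r.toNat * qbinom q n r + qbinom q n (r-1))
          + q ^ ((n:ℤ)+1+1-r).toNat * (q ^ (r-1).toNat * qbinom q n (r-1)
            + qbinom q n (r-1-1)) := by
        rw [qbinom_succ, qbinom_succ]
      have p1 : q ^ r.toNat * q ^ ((n:ℤ)+1-r).toNat = q ^ (n+1) := by
        rw [← pow_add]; congr 1; omega
      have p2 : q ^ ((n:ℤ)+1+1-r).toNat * q ^ (r-1).toNat = q ^ (n+1) := by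
        rw [← pow_add]; congr 1; omega
      have p4 : ((n:ℤ)+1-(r-1)).toNat = ((n:ℤ)+1+1-r).toNat := by omega
      rw [p4] at hL
      rw [hL, hR]
      linear_combination qbinom q n (r-1) * p1 - qbinom q n (r-1) * p2

lemma qbinom_symm (n : ℕ) : ∀ r : ℤ, qbinom q n ((n : ℤ) - r) = qbinom q n r := by
  induction n with
  | zero => intro r; simp [qbinom, sub_eq_zero, eq_comm]
  | succ n ih =>
      intro r
      rw [qbinom_succ, qbinom_pascal2 q n r]
      push_cast
      rw [show (n:ℤ) + 1 - r - 1 = (n:ℤ) - r from by ring, ih r,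
        show ((n:ℤ) + 1 - r) = (n:ℤ) - (r - 1) from by ring, ih (r-1)]
      rw [show (n:ℤ) - (r-1) = (n:ℤ) + 1 - r from by ring]
      ring
end qb

section defs

def chiZ (k : ℕ) : ℤ := if k % 3 = 0 then 1 else if k % 3 = 1 then -1 else 0
def deltaZ (k : ℕ) : ℤ := if k % 3 = 1 then 1 else if k % 3 = 2 then -1 else 0
def eE (n k : ℕ) : ℤ :=
  ((k : ℤ) ^ 2 - (if (k : ℤ) % 3 = 2 then 3 * (n : ℤ) - k else (k : ℤ))) / 3 - (k : ℤ) * n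

lemma eE_eq_a (n k : ℕ) (c : ℤ) (h2 : ¬ ((k:ℤ) % 3 = 2))
    (hc : (k:ℤ)^2 - (k:ℤ) = 3*c) : eE n k = c - k*n := by
  rw [eE, if_neg h2, hc, Int.mul_ediv_cancel_left _ (by norm_num)]

lemma eE_eq_b (n k : ℕ) (c : ℤ) (h2 : (k:ℤ) % 3 = 2)
    (hc : (k:ℤ)^2 - (3*(n:ℤ) - k) = 3*c) : eE n k = c - k*n := by
  rw [eE, if_pos h2, hc, Int.mul_ediv_cancel_left _ (by norm_num)]

lemma pair_cancel {K : Type*} [CommRing K] (n : ℕ) (f : ℕ → K)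
    (hf : ∀ k ∈ Finset.Icc n (2*n), f k + f (3*n - k) = 0)
    (h0 : ∀ k ∈ Finset.Icc n (2*n), 2*k = 3*n → f k = 0) :
    ∑ k ∈ Finset.Icc n (2*n), f k = 0 := by
  apply Finset.sum_involution (g := fun k _ => 3*n - k)
  · exact hf
  · intro a ha hfa
    intro hgg
    simp only [Finset.mem_Icc] at ha
    exact hfa (h0 a (by simp [Finset.mem_Icc]; omega) (by omega))
  · intro a ha
    simp only [Finset.mem_Icc] at ha ⊢
    omega
  · intro a ha
    simp only [Finset.mem_Icc] at ha
    omega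

lemma sum_reflect {K : Type*} [CommRing K] (n : ℕ) (f : ℕ → K) :
    ∑ k ∈ Finset.Icc n (2*n), f k = ∑ k ∈ Finset.Icc n (2*n), f (3*n - k) := by
  apply Finset.sum_nbij' (i := fun k => 3*n - k) (j := fun k => 3*n - k) <;>
    simp only [Finset.mem_Icc] <;> intro a ha
  · omega
  · omega
  · omega
  · omega
  · rw [show 3*n - (3*n - a) = a by omega]

end defs

section main
variable {K : Type*} [Field K]

lemma chiK_0 {k : ℕ} (h : k % 3 = 2) : ((chiZ k : ℤ) : K) = 0 := by
  simp [chiZ, h]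
lemma chiK_1 {k : ℕ} (h : k % 3 = 0) : ((chiZ k : ℤ) : K) = 1 := by
  simp [chiZ, h]
lemma chiK_m1 {k : ℕ} (h : k % 3 = 1) : ((chiZ k : ℤ) : K) = -1 := by
  simp [chiZ, h]

noncomputable def Wt (q : K) (n k : ℕ) : K :=
  (chiZ k : K) * q ^ (eE n k) * qbinom q n ((k : ℤ) - n)

noncomputable def Wsum (q : K) (n : ℕ) : K := ∑ k ∈ Finset.Icc n (2*n), Wt q n k

lemma Wsum_zero (q : K) : Wsum q 0 = 1 := by
  simp [Wsum, Wt, chiZ, eE, qbinom]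

lemma sigma2_zero (q : K) (n : ℕ) :
    ∑ k ∈ Finset.Icc (n+1) (2*n+2),
      (chiZ k : K) * q ^ (eE (n+1) k) * qbinom q n ((k : ℤ) - (n+1) - 1) = 0 := by
  have h1 : ∑ k ∈ Finset.Icc (n+1) (2*n+2),
      (chiZ k : K) * q ^ (eE (n+1) k) * qbinom q n ((k : ℤ) - (n+1) - 1)
      = ∑ k ∈ Finset.Icc (n+2) (2*n+2),
      (chiZ k : K) * q ^ (eE (n+1) k) * qbinom q n ((k : ℤ) - (n+1) - 1) := by
    refine (Finset.sum_subset (Finset.Icc_subset_Icc (by omega) le_rfl) ?_).symm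
    intro x hx hx2
    simp only [Finset.mem_Icc] at hx hx2
    have hx3 : x = n + 1 := by omega
    subst hx3
    rw [qbinom_neg q n _ (by push_cast; omega)]
    ring
  have h2 : ∑ k ∈ Finset.Icc (n+2) (2*n+2),
      (chiZ k : K) * q ^ (eE (n+1) k) * qbinom q n ((k : ℤ) - (n+1) - 1)
      = ∑ k ∈ Finset.Icc n (2*n),
      (chiZ (k+2) : K) * q ^ (eE (n+1) (k+2)) * qbinom q n ((k : ℤ) - n) := by
    refine Finset.sum_nbij' (i := fun k => k - 2) (j := fun k => k + 2) ?_ ?_ ?_ ?_ ?_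
    · intro a ha; simp only [Finset.mem_Icc] at ha ⊢; omega
    · intro a ha; simp only [Finset.mem_Icc] at ha ⊢; omega
    · intro a ha; simp only [Finset.mem_Icc] at ha; show a - 2 + 2 = a; omega
    · intro a ha; simp only [Finset.mem_Icc] at ha; show a + 2 - 2 = a; omega
    · intro a ha
      simp only [Finset.mem_Icc] at ha
      have e1 : a - 2 + 2 = a := by omega
      have e2 : ((a - 2 : ℕ) : ℤ) - (n : ℤ) = (a : ℤ) - (n+1) - 1 := by omega
      rw [e1, e2]
  rw [h1, h2]
  apply pair_cancel
  · -- pairing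
    intro k hk
    simp only [Finset.mem_Icc] at hk
    rcases (by omega : k % 3 = 0 ∨ k % 3 = 1 ∨ k % 3 = 2) with h | h | h
    · rw [chiK_0 (by omega : (k+2) % 3 = 2), chiK_0 (by omega : (3*n-k+2) % 3 = 2)]
      ring
    · -- k = 3a+1 pairs with 3n-k ≡ 2
      obtain ⟨a, ha⟩ : ∃ a : ℕ, k = 3*a+1 := ⟨k/3, by omega⟩
      rw [chiK_1 (by omega : (k+2) % 3 = 0), chiK_m1 (by omega : (3*n-k+2) % 3 = 1)]
      have hqb : qbinom q n (((3*n-k : ℕ) : ℤ) - n) = qbinom q n ((k:ℤ) - n) := by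
        rw [show ((3*n-k : ℕ) : ℤ) - (n:ℤ) = (n:ℤ) - ((k:ℤ) - n) by omega, qbinom_symm]
      have he : eE (n+1) (k+2) = eE (n+1) (3*n-k+2) := by
        rw [eE_eq_a (n+1) (k+2) (3*(a:ℤ)^2+5*a+2) (by omega)
            (by rw [show ((k+2:ℕ):ℤ) = 3*(a:ℤ)+3 by omega]; ring),
          eE_eq_a (n+1) (3*n-k+2) (3*((n:ℤ)-a)^2+((n:ℤ)-a)) (by omega)
            (by rw [show ((3*n-k+2:ℕ):ℤ) = 3*((n:ℤ)-a)+1 by omega]; ring),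
          show ((k+2:ℕ):ℤ) = 3*(a:ℤ)+3 by omega,
          show ((3*n-k+2:ℕ):ℤ) = 3*((n:ℤ)-a)+1 by omega]
        push_cast
        ring
      rw [hqb, he]
      ring
    · -- k = 3a+2 pairs with 3n-k ≡ 1
      obtain ⟨a, ha⟩ : ∃ a : ℕ, k = 3*a+2 := ⟨k/3, by omega⟩
      rw [chiK_m1 (by omega : (k+2) % 3 = 1), chiK_1 (by omega : (3*n-k+2) % 3 = 0)]
      have hqb : qbinom q n (((3*n-k : ℕ) : ℤ) - n) = qbinom q n ((k:ℤ) - n) := by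
        rw [show ((3*n-k : ℕ) : ℤ) - (n:ℤ) = (n:ℤ) - ((k:ℤ) - n) by omega, qbinom_symm]
      have he : eE (n+1) (k+2) = eE (n+1) (3*n-k+2) := by
        rw [eE_eq_a (n+1) (k+2) (3*(a:ℤ)^2+7*a+4) (by omega)
            (by rw [show ((k+2:ℕ):ℤ) = 3*(a:ℤ)+4 by omega]; ring),
          eE_eq_a (n+1) (3*n-k+2) (3*((n:ℤ)-a)^2-((n:ℤ)-a)) (by omega)
            (by rw [show ((3*n-k+2:ℕ):ℤ) = 3*((n:ℤ)-a) by omega]; ring),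
          show ((k+2:ℕ):ℤ) = 3*(a:ℤ)+4 by omega,
          show ((3*n-k+2:ℕ):ℤ) = 3*((n:ℤ)-a) by omega]
        push_cast
        ring
      rw [hqb, he]
      ring
  · -- fixed points
    intro k hk h2k
    rw [chiK_0 (by omega : (k+2) % 3 = 2)]
    ring

lemma sigma1_W (q : K) (hq : q ≠ 0) (n : ℕ) :
    q^(n+1) * (∑ k ∈ Finset.Icc (n+1) (2*n+2),
      (chiZ k : K) * q ^ (eE (n+1) k) *
        (q ^ ((k:ℤ) - (n+1)).toNat * qbinom q n ((k:ℤ) - (n+1))))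
      + Wsum q n = 0 := by
  have h1 : ∑ k ∈ Finset.Icc (n+1) (2*n+2),
      (chiZ k : K) * q ^ (eE (n+1) k) *
        (q ^ ((k:ℤ) - (n+1)).toNat * qbinom q n ((k:ℤ) - (n+1)))
      = ∑ k ∈ Finset.Icc (n+1) (2*n+1),
      (chiZ k : K) * q ^ (eE (n+1) k) *
        (q ^ ((k:ℤ) - (n+1)).toNat * qbinom q n ((k:ℤ) - (n+1))) := by
    refine (Finset.sum_subset (Finset.Icc_subset_Icc le_rfl (by omega)) ?_).symm
    intro x hx hx2
    simp only [Finset.mem_Icc] at hx hx2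
    have hx3 : x = 2*n + 2 := by omega
    subst hx3
    rw [qbinom_gt q n _ (by push_cast; omega)]
    ring
  have h2 : ∑ k ∈ Finset.Icc (n+1) (2*n+1),
      (chiZ k : K) * q ^ (eE (n+1) k) *
        (q ^ ((k:ℤ) - (n+1)).toNat * qbinom q n ((k:ℤ) - (n+1)))
      = ∑ k ∈ Finset.Icc n (2*n),
      (chiZ (k+1) : K) * q ^ (eE (n+1) (k+1)) *
        (q ^ ((k:ℤ) - n).toNat * qbinom q n ((k:ℤ) - n)) := by
    refine Finset.sum_nbij' (i := fun k => k - 1) (j := fun k => k + 1) ?_ ?_ ?_ ?_ ?_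
    · intro a ha; simp only [Finset.mem_Icc] at ha ⊢; omega
    · intro a ha; simp only [Finset.mem_Icc] at ha ⊢; omega
    · intro a ha; simp only [Finset.mem_Icc] at ha; show a - 1 + 1 = a; omega
    · intro a ha; simp only [Finset.mem_Icc] at ha; show a + 1 - 1 = a; omega
    · intro a ha
      simp only [Finset.mem_Icc] at ha
      have e1 : a - 1 + 1 = a := by omega
      have e2 : ((a - 1 : ℕ) : ℤ) - (n : ℤ) = (a : ℤ) - (n+1) := by omega
      rw [e1, e2]
  have h3 : Wsum q n = ∑ k ∈ Finset.Icc n (2*n), Wt q n (3*n - k) := sum_reflect n (Wt q n)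
  rw [h1, h2, h3, Finset.mul_sum, ← Finset.sum_add_distrib]
  apply Finset.sum_eq_zero
  intro k hk
  simp only [Finset.mem_Icc] at hk
  rw [Wt]
  rcases (by omega : k % 3 = 0 ∨ k % 3 = 1 ∨ k % 3 = 2) with h | h | h
  · obtain ⟨a, ha⟩ : ∃ a : ℕ, k = 3*a := ⟨k/3, by omega⟩
    rw [chiK_m1 (by omega : (k+1) % 3 = 1), chiK_1 (by omega : (3*n-k) % 3 = 0)]
    have hqb : qbinom q n (((3*n-k : ℕ) : ℤ) - n) = qbinom q n ((k:ℤ) - n) := by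
      rw [show ((3*n-k : ℕ) : ℤ) - (n:ℤ) = (n:ℤ) - ((k:ℤ) - n) by omega, qbinom_symm]
    have hpow : q^(n+1) * (q ^ (eE (n+1) (k+1)) * q ^ ((k:ℤ) - n).toNat)
        = q ^ (eE n (3*n-k)) := by
      rw [← zpow_natCast q (n+1), ← zpow_natCast q ((k:ℤ) - (n:ℤ)).toNat,
        Int.toNat_of_nonneg (by omega : (0:ℤ) ≤ (k:ℤ) - n),
        ← zpow_add₀ hq, ← zpow_add₀ hq]
      congr 1
      rw [eE_eq_a (n+1) (k+1) (3*(a:ℤ)^2+(a:ℤ)) (by omega)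
          (by rw [show ((k+1:ℕ):ℤ) = 3*(a:ℤ)+1 by omega]; ring),
        eE_eq_a n (3*n-k) (3*((n:ℤ)-a)^2-((n:ℤ)-a)) (by omega)
          (by rw [show ((3*n-k:ℕ):ℤ) = 3*((n:ℤ)-a) by omega]; ring),
        show ((k+1:ℕ):ℤ) = 3*(a:ℤ)+1 by omega,
        show ((3*n-k:ℕ):ℤ) = 3*((n:ℤ)-a) by omega,
        show ((k:ℤ)) = 3*(a:ℤ) by omega]
      push_cast
      ring
    rw [hqb]
    linear_combination (-(qbinom q n ((k:ℤ) - n))) * hpow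
  · rw [chiK_0 (by omega : (k+1) % 3 = 2), chiK_0 (by omega : (3*n-k) % 3 = 2)]
    ring
  · obtain ⟨a, ha⟩ : ∃ a : ℕ, k = 3*a+2 := ⟨k/3, by omega⟩
    rw [chiK_1 (by omega : (k+1) % 3 = 0), chiK_m1 (by omega : (3*n-k) % 3 = 1)]
    have hqb : qbinom q n (((3*n-k : ℕ) : ℤ) - n) = qbinom q n ((k:ℤ) - n) := by
      rw [show ((3*n-k : ℕ) : ℤ) - (n:ℤ) = (n:ℤ) - ((k:ℤ) - n) by omega, qbinom_symm]
    have hpow : q^(n+1) * (q ^ (eE (n+1) (k+1)) * q ^ ((k:ℤ) - n).toNat)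
        = q ^ (eE n (3*n-k)) := by
      rw [← zpow_natCast q (n+1), ← zpow_natCast q ((k:ℤ) - (n:ℤ)).toNat,
        Int.toNat_of_nonneg (by omega : (0:ℤ) ≤ (k:ℤ) - n),
        ← zpow_add₀ hq, ← zpow_add₀ hq]
      congr 1
      rw [eE_eq_a (n+1) (k+1) (3*(a:ℤ)^2+5*(a:ℤ)+2) (by omega)
          (by rw [show ((k+1:ℕ):ℤ) = 3*(a:ℤ)+3 by omega]; ring),
        eE_eq_a n (3*n-k) (3*((n:ℤ)-a-1)^2+((n:ℤ)-a-1)) (by omega)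
          (by rw [show ((3*n-k:ℕ):ℤ) = 3*((n:ℤ)-a-1)+1 by omega]; ring),
        show ((k+1:ℕ):ℤ) = 3*(a:ℤ)+3 by omega,
        show ((3*n-k:ℕ):ℤ) = 3*((n:ℤ)-a-1)+1 by omega,
        show ((k:ℤ)) = 3*(a:ℤ)+2 by omega]
      push_cast
      ring
    rw [hqb]
    linear_combination qbinom q n ((k:ℤ) - n) * hpow

lemma Wsum_succ (q : K) (hq : q ≠ 0) (n : ℕ) :
    q^(n+1) * Wsum q (n+1) + Wsum q n = 0 := by
  have hW : Wsum q (n+1) = (∑ k ∈ Finset.Icc (n+1) (2*n+2),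
      (chiZ k : K) * q ^ (eE (n+1) k) *
        (q ^ ((k:ℤ) - (n+1)).toNat * qbinom q n ((k:ℤ) - (n+1))))
      + ∑ k ∈ Finset.Icc (n+1) (2*n+2),
      (chiZ k : K) * q ^ (eE (n+1) k) * qbinom q n ((k : ℤ) - (n+1) - 1) := by
    rw [Wsum, show 2*(n+1) = 2*n+2 by ring, ← Finset.sum_add_distrib]
    apply Finset.sum_congr rfl
    intro k hk
    rw [Wt, qbinom_succ]
    push_cast
    ring
  rw [hW]
  linear_combination sigma1_W q hq n + q^(n+1) * sigma2_zero q n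

lemma inner_eq_W (q ω : K) (hω : ω^2 + ω + 1 = 0) (n : ℕ) :
    ∑ k ∈ Finset.Icc n (2*n), q ^ (eE n k) * qbinom q n ((k:ℤ) - n) * ω ^ k
      = Wsum q n := by
  have hω3 : ω^3 = 1 := by linear_combination (ω - 1) * hω
  have hsplit : ∀ k ∈ Finset.Icc n (2*n),
      q ^ (eE n k) * qbinom q n ((k:ℤ) - n) * ω ^ k
      = Wt q n k + (1+ω) * ((deltaZ k : K) * (q ^ (eE n k) * qbinom q n ((k:ℤ) - n))) := by
    intro k hk
    have hpow : ω ^ k = ω ^ (k % 3) := by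
      conv_lhs => rw [← Nat.div_add_mod k 3]
      rw [pow_add, pow_mul, hω3, one_pow, one_mul]
    rw [Wt, hpow]
    rcases (by omega : k % 3 = 0 ∨ k % 3 = 1 ∨ k % 3 = 2) with h | h | h
    · rw [h, chiK_1 h, show ((deltaZ k : ℤ) : K) = 0 by simp [deltaZ, h]]
      ring
    · rw [h, chiK_m1 h, show ((deltaZ k : ℤ) : K) = 1 by simp [deltaZ, h]]
      ring
    · rw [h, chiK_0 h, show ((deltaZ k : ℤ) : K) = -1 by simp [deltaZ, h]]
      linear_combination (q ^ (eE n k) * qbinom q n ((k:ℤ) - n)) * hω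
  rw [Finset.sum_congr rfl hsplit, Finset.sum_add_distrib, ← Finset.mul_sum]
  have hzero : ∑ k ∈ Finset.Icc n (2*n),
      ((deltaZ k : K) * (q ^ (eE n k) * qbinom q n ((k:ℤ) - n))) = 0 := by
    apply pair_cancel
    · intro k hk
      simp only [Finset.mem_Icc] at hk
      rcases (by omega : k % 3 = 0 ∨ k % 3 = 1 ∨ k % 3 = 2) with h | h | h
      · rw [show ((deltaZ k : ℤ) : K) = 0 by simp [deltaZ, h],
          show ((deltaZ (3*n-k) : ℤ) : K) = 0 by simp [deltaZ, (by omega : (3*n-k) % 3 = 0)]]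
        ring
      · obtain ⟨a, ha⟩ : ∃ a : ℕ, k = 3*a+1 := ⟨k/3, by omega⟩
        rw [show ((deltaZ k : ℤ) : K) = 1 by simp [deltaZ, h],
          show ((deltaZ (3*n-k) : ℤ) : K) = -1 by
            simp [deltaZ, (by omega : (3*n-k) % 3 = 2)]]
        have hqb : qbinom q n (((3*n-k : ℕ) : ℤ) - n) = qbinom q n ((k:ℤ) - n) := by
          rw [show ((3*n-k : ℕ) : ℤ) - (n:ℤ) = (n:ℤ) - ((k:ℤ) - n) by omega, qbinom_symm]
        have he : eE n k = eE n (3*n-k) := by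
          rw [eE_eq_a n k (3*(a:ℤ)^2+(a:ℤ)) (by omega)
              (by rw [show ((k:ℕ):ℤ) = 3*(a:ℤ)+1 by omega]; ring),
            eE_eq_b n (3*n-k) (((n:ℤ)-a)*(3*((n:ℤ)-a)-1) - n) (by omega)
              (by rw [show ((3*n-k:ℕ):ℤ) = 3*((n:ℤ)-a)-1 by omega]; ring),
            show ((k:ℕ):ℤ) = 3*(a:ℤ)+1 by omega,
            show ((3*n-k:ℕ):ℤ) = 3*((n:ℤ)-a)-1 by omega]
          ring
        rw [hqb, he]
        ring
      · obtain ⟨a, ha⟩ : ∃ a : ℕ, k = 3*a+2 := ⟨k/3, by omega⟩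
        rw [show ((deltaZ k : ℤ) : K) = -1 by simp [deltaZ, h],
          show ((deltaZ (3*n-k) : ℤ) : K) = 1 by
            simp [deltaZ, (by omega : (3*n-k) % 3 = 1)]]
        have hqb : qbinom q n (((3*n-k : ℕ) : ℤ) - n) = qbinom q n ((k:ℤ) - n) := by
          rw [show ((3*n-k : ℕ) : ℤ) - (n:ℤ) = (n:ℤ) - ((k:ℤ) - n) by omega, qbinom_symm]
        have he : eE n k = eE n (3*n-k) := by
          rw [eE_eq_b n k (3*(a:ℤ)^2+5*(a:ℤ)+2-(n:ℤ)) (by omega)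
              (by rw [show ((k:ℕ):ℤ) = 3*(a:ℤ)+2 by omega]; ring),
            eE_eq_a n (3*n-k) (3*((n:ℤ)-a-1)^2+((n:ℤ)-a-1)) (by omega)
              (by rw [show ((3*n-k:ℕ):ℤ) = 3*((n:ℤ)-a-1)+1 by omega]; ring),
            show ((k:ℕ):ℤ) = 3*(a:ℤ)+2 by omega,
            show ((3*n-k:ℕ):ℤ) = 3*((n:ℤ)-a-1)+1 by omega]
          ring
        rw [hqb, he]
        ring
    · intro k hk h2k
      rw [show ((deltaZ k : ℤ) : K) = 0 by simp [deltaZ, (by omega : k % 3 = 0)]]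
      ring
  rw [hzero, mul_zero, add_zero, Wsum]

lemma choose2_succ (i : ℕ) : (i+1).choose 2 = i.choose 2 + i := by
  have h := Nat.choose_succ_succ i 1
  norm_num at h
  omega

lemma W_value (q : K) (hq : q ≠ 0) (n : ℕ) :
    q ^ ((n+1).choose 2) * Wsum q n = (-1)^n := by
  induction n with
  | zero => simp [Wsum_zero]
  | succ n ih =>
      rw [choose2_succ (n+1), pow_add]
      have hs : q ^ (n+1) * Wsum q (n+1) = - Wsum q n := by
        linear_combination Wsum_succ q hq n
      calc q ^ ((n+1).choose 2) * q ^ (n+1) * Wsum q (n+1)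
          = q ^ ((n+1).choose 2) * (q ^ (n+1) * Wsum q (n+1)) := by ring
        _ = q ^ ((n+1).choose 2) * (- Wsum q n) := by rw [hs]
        _ = -(q ^ ((n+1).choose 2) * Wsum q n) := by ring
        _ = -(-1)^n := by rw [ih]
        _ = (-1)^(n+1) := by ring
lemma gauss_qbinom (p : K) (N : ℕ) : ∀ x : K,
    ∑ n ∈ Finset.range (N+1), p ^ (n.choose 2) * x^n * qbinom p N (n : ℤ)
      = ∏ i ∈ Finset.range N, (1 + x * p^i) := by
  induction N with
  | zero => intro x; simp [qbinom]
  | succ N ih =>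
      intro x
      have key : ∀ n ∈ Finset.range (N+2),
          p ^ (n.choose 2) * x^n * qbinom p (N+1) (n:ℤ)
          = p ^ (n.choose 2) * x^n * p ^ n * qbinom p N (n:ℤ)
            + p ^ (n.choose 2) * x^n * qbinom p N ((n:ℤ)-1) := by
        intro n _
        rw [qbinom_succ, Int.toNat_natCast]
        ring
      rw [Finset.sum_congr rfl key, Finset.sum_add_distrib]
      have hA : ∑ n ∈ Finset.range (N+2),
          p ^ (n.choose 2) * x^n * p ^ n * qbinom p N (n:ℤ)
          = ∏ i ∈ Finset.range N, (1 + x * p * p^i) := by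
        rw [Finset.sum_range_succ, qbinom_gt p N (N+1 : ℕ) (by push_cast; omega), mul_zero,
          add_zero, ← ih (x*p)]
        apply Finset.sum_congr rfl
        intro n _
        rw [mul_pow]
        ring
      have hB : ∑ n ∈ Finset.range (N+2),
          p ^ (n.choose 2) * x^n * qbinom p N ((n:ℤ)-1)
          = x * ∏ i ∈ Finset.range N, (1 + x * p * p^i) := by
        rw [Finset.sum_range_succ']
        rw [show ((0:ℕ):ℤ) - 1 = -1 by norm_num, qbinom_neg p N (-1) (by norm_num)]
        rw [← ih (x*p), Finset.mul_sum]
        simp only [mul_zero, add_zero]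
        apply Finset.sum_congr rfl
        intro i _
        rw [show ((i+1:ℕ):ℤ) - 1 = (i:ℤ) by push_cast; ring, choose2_succ i, pow_add, mul_pow]
        ring
      rw [hA, hB, Finset.prod_range_succ']
      have hP : ∀ i ∈ Finset.range N, (1 + x * p^(i+1)) = (1 + x * p * p^i) := by
        intro i _; rw [pow_succ]; ring
      rw [Finset.prod_congr rfl hP]
      ring

end main

theorem stmt_11 {K : Type*} [Field K] (p q ω z : K)
    (hp : p ≠ 0) (hq : q ≠ 0) (hω : ω ^ 2 + ω + 1 = 0) (hω1 : ω ≠ 1) (m : ℕ) :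
    ∑ n ∈ Finset.range (3 * m + 1),
      q ^ ((n + 1).choose 2) * p ^ (n.choose 2) * z ^ n * qbinom p (3 * m) n *
        ∑ k ∈ Finset.Icc n (2 * n),
          q ^ ((((k : ℤ) ^ 2 -
                (if (k : ℤ) % 3 = 2 then 3 * (n : ℤ) - k else (k : ℤ))) / 3) -
              (k : ℤ) * n) *
            qbinom q n ((k : ℤ) - n) * ω ^ k =
      ∏ i ∈ Finset.range (3 * m), (1 - z * p ^ i) := by
  have hterm : ∀ n ∈ Finset.range (3 * m + 1),
      q ^ ((n + 1).choose 2) * p ^ (n.choose 2) * z ^ n * qbinom p (3 * m) n *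
        (∑ k ∈ Finset.Icc n (2 * n),
          q ^ ((((k : ℤ) ^ 2 -
                (if (k : ℤ) % 3 = 2 then 3 * (n : ℤ) - k else (k : ℤ))) / 3) -
              (k : ℤ) * n) *
            qbinom q n ((k : ℤ) - n) * ω ^ k)
      = p ^ (n.choose 2) * (-z) ^ n * qbinom p (3 * m) (n : ℤ) := by
    intro n _
    have hin : (∑ k ∈ Finset.Icc n (2 * n),
          q ^ ((((k : ℤ) ^ 2 -
                (if (k : ℤ) % 3 = 2 then 3 * (n : ℤ) - k else (k : ℤ))) / 3) -
              (k : ℤ) * n) *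
            qbinom q n ((k : ℤ) - n) * ω ^ k) = Wsum q n := inner_eq_W q ω hω n
    rw [hin, neg_pow]
    linear_combination (p ^ (n.choose 2) * z ^ n * qbinom p (3 * m) (n : ℤ)) * W_value q hq n
  rw [Finset.sum_congr rfl hterm, gauss_qbinom p (3*m) (-z)]
  apply Finset.prod_congr rfl
  intro i _
  ring
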